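/- (Lemma A11) For every γ ∈ ℝ^J, under complete randomization, n·Var(τ̂ − γᵀτ̂_w) = (V_ττ − V_τw V_ww⁻¹ V_wτ) + (r₁r₀)⁻¹ (γ − γ̃)ᵀ S_w² (γ − γ̃), where γ̃ = V_ww⁻¹ V_wτ. With γ = r₀β₁ + r₁β₀, this is the paper's identity V_ττ(β₁,β₀) = V_ττ(1 − R²_{τ,w}) + (r₁r₀)⁻¹ (γ − γ̃)ᵀ S_w² (γ − γ̃). -/

import Mathlib

open Finset Matrix

noncomputable section

/-- The set of possible complete-randomization treatment assignments:
subsets of `{1,…,n}` of size `n₁` (the treated units). -/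
def Omega (n n₁ : ℕ) : Finset (Finset (Fin n)) :=
  Finset.powersetCard n₁ Finset.univ

/-- Expectation under complete randomization (uniform over `Omega n n₁`). -/
def crE (n n₁ : ℕ) (f : Finset (Fin n) → ℝ) : ℝ :=
  (∑ s ∈ Omega n n₁, f s) / ((Omega n n₁).card : ℝ)

/-- Variance under complete randomization. -/
def crVar (n n₁ : ℕ) (f : Finset (Fin n) → ℝ) : ℝ :=
  crE n n₁ fun s => (f s - crE n n₁ f) ^ 2

/-- Covariance under complete randomization. -/
def crCov (n n₁ : ℕ) (f g : Finset (Fin n) → ℝ) : ℝ :=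
  crE n n₁ fun s => (f s - crE n n₁ f) * (g s - crE n n₁ g)

/-- Difference-in-means estimator `τ̂` of the average treatment effect. -/
def tauHat (n n₁ n₀ : ℕ) (Y1 Y0 : Fin n → ℝ) (s : Finset (Fin n)) : ℝ :=
  (n₁ : ℝ)⁻¹ * ∑ i, (if i ∈ s then Y1 i else 0)
    - (n₀ : ℝ)⁻¹ * ∑ i, (if i ∈ s then 0 else Y0 i)

/-- Difference-in-means `τ̂_w` of a covariate vector. -/
def tauHatVec (n n₁ n₀ J : ℕ) (w : Fin n → Fin J → ℝ) (s : Finset (Fin n)) :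
    Fin J → ℝ := fun j =>
  (n₁ : ℝ)⁻¹ * ∑ i, (if i ∈ s then w i j else 0)
    - (n₀ : ℝ)⁻¹ * ∑ i, (if i ∈ s then 0 else w i j)

/-- Finite-population mean. -/
def popMean (n : ℕ) (Y : Fin n → ℝ) : ℝ := (n : ℝ)⁻¹ * ∑ i, Y i

/-- Finite-population variance `S²_Y`. -/
def popVar (n : ℕ) (Y : Fin n → ℝ) : ℝ :=
  ((n : ℝ) - 1)⁻¹ * ∑ i, (Y i - popMean n Y) ^ 2

/-- Finite-population covariance `S_{w,Y}` between centered covariates and an outcome. -/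
def covVec (n J : ℕ) (w : Fin n → Fin J → ℝ) (Y : Fin n → ℝ) : Fin J → ℝ := fun j =>
  ((n : ℝ) - 1)⁻¹ * ∑ i, w i j * (Y i - popMean n Y)

/-- Finite-population covariance matrix `S_{w,x}` between two sets of centered covariates. -/
def covMat (n J K : ℕ) (w : Fin n → Fin J → ℝ) (x : Fin n → Fin K → ℝ) :
    Matrix (Fin J) (Fin K) ℝ :=
  Matrix.of fun j k => ((n : ℝ) - 1)⁻¹ * ∑ i, w i j * x i k

/-- `V_ττ = r₁⁻¹ S²_{Y(1)} + r₀⁻¹ S²_{Y(0)} − S²_τ`. -/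
def Vtt (n n₁ n₀ : ℕ) (Y1 Y0 : Fin n → ℝ) : ℝ :=
  ((n₁ : ℝ) / n)⁻¹ * popVar n Y1 + ((n₀ : ℝ) / n)⁻¹ * popVar n Y0
    - popVar n (fun i => Y1 i - Y0 i)

/-- `V_wτ = r₁⁻¹ S_{w,Y(1)} + r₀⁻¹ S_{w,Y(0)}`. -/
def VvecTau (n n₁ n₀ J : ℕ) (w : Fin n → Fin J → ℝ) (Y1 Y0 : Fin n → ℝ) :
    Fin J → ℝ :=
  ((n₁ : ℝ) / n)⁻¹ • covVec n J w Y1 + ((n₀ : ℝ) / n)⁻¹ • covVec n J w Y0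

/-- `V_wx = (r₁ r₀)⁻¹ S_{w,x}` (covariance blocks of the matrix `V`). -/
def Vmat (n n₁ n₀ J K : ℕ) (w : Fin n → Fin J → ℝ) (x : Fin n → Fin K → ℝ) :
    Matrix (Fin J) (Fin K) ℝ :=
  (((n₁ : ℝ) / n) * ((n₀ : ℝ) / n))⁻¹ • covMat n J K w x

namespace CRE

lemma count_contains (n k : ℕ) (t : Finset (Fin n)) (ht : t.card ≤ k) :
    ((Omega n k).filter fun s => t ⊆ s).card = (n - t.card).choose (k - t.card) := by
  have h : (Finset.powersetCard (k - t.card) (Finset.univ \ t)).card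
      = (n - t.card).choose (k - t.card) := by
    rw [Finset.card_powersetCard, Finset.card_sdiff_of_subset (Finset.subset_univ t), Finset.card_univ,
      Fintype.card_fin]
  rw [← h]
  apply Finset.card_bij' (fun s _ => s \ t) (fun u _ => u ∪ t)
  · intro s hs
    simp only [Finset.mem_filter, Omega, Finset.mem_powersetCard] at hs
    simp only [Finset.mem_powersetCard]
    exact ⟨Finset.sdiff_subset_sdiff hs.1.1 le_rfl,
      by rw [Finset.card_sdiff_of_subset hs.2, hs.1.2]⟩
  · intro u hu
    simp only [Finset.mem_powersetCard] at hu
    simp only [Finset.mem_filter, Omega, Finset.mem_powersetCard]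
    have hdisj : Disjoint u t := (Finset.sdiff_disjoint).mono_left hu.1
    refine ⟨⟨Finset.subset_univ _, ?_⟩, Finset.subset_union_right⟩
    rw [Finset.card_union_of_disjoint hdisj, hu.2]
    omega
  · intro s hs
    simp only [Finset.mem_filter] at hs
    exact Finset.sdiff_union_of_subset hs.2
  · intro u hu
    simp only [Finset.mem_powersetCard] at hu
    have hdisj : Disjoint u t := (Finset.sdiff_disjoint).mono_left hu.1
    exact Finset.union_sdiff_cancel_right hdisj

lemma card_Omega (n k : ℕ) : (Omega n k).card = n.choose k := by
  rw [Omega, Finset.card_powersetCard, Finset.card_univ, Fintype.card_fin]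

lemma count_single (n k : ℕ) (hk : 1 ≤ k) (i : Fin n) :
    ((Omega n k).filter fun s => i ∈ s).card = (n - 1).choose (k - 1) := by
  have := count_contains n k {i} (by simpa using hk)
  simpa using this

lemma count_pair (n k : ℕ) (hk : 2 ≤ k) (i j : Fin n) (hij : i ≠ j) :
    ((Omega n k).filter fun s => i ∈ s ∧ j ∈ s).card = (n - 2).choose (k - 2) := by
  have := count_contains n k {i, j} (by rw [Finset.card_pair hij]; exact hk)
  rw [Finset.card_pair hij] at this
  simpa [Finset.insert_subset_iff] using this

lemma pair_rel (n k : ℕ) (hk : 1 ≤ k) (i j : Fin n) (hij : i ≠ j) :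
    (((Omega n k).filter fun s => i ∈ s ∧ j ∈ s).card : ℝ) * ((n : ℝ) - 1)
      = ((n - 1).choose (k - 1) : ℝ) * ((k : ℝ) - 1) := by
  rcases eq_or_lt_of_le hk with h1 | h2
  · have hemp : ((Omega n k).filter fun s => i ∈ s ∧ j ∈ s) = ∅ := by
      rw [Finset.filter_eq_empty_iff]
      rintro s hs ⟨hi, hj⟩
      rw [Omega, Finset.mem_powersetCard] at hs
      have hsub : ({i, j} : Finset (Fin n)) ⊆ s := by
        simp [Finset.insert_subset_iff, hi, hj]
      have := Finset.card_le_card hsub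
      rw [Finset.card_pair hij, hs.2, ← h1] at this
      omega
    rw [hemp, ← h1]
    simp
  · have hk2 : 2 ≤ k := h2
    by_cases hkn : k ≤ n
    · have hn2 : 2 ≤ n := le_trans hk2 hkn
      rw [count_pair n k hk2 i j hij]
      have hnat : (n - 1) * (n - 2).choose (k - 2) = (n - 1).choose (k - 1) * (k - 1) := by
        have := Nat.add_one_mul_choose_eq (n - 2) (k - 2)
        have e1 : n - 2 + 1 = n - 1 := by omega
        have e2 : k - 2 + 1 = k - 1 := by omega
        rw [e1, e2] at this
        exact this
      have hc : ((n : ℝ) - 1) = ((n - 1 : ℕ) : ℝ) := by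
        rw [Nat.cast_sub (by omega)]; norm_num
      have hc2 : ((k : ℝ) - 1) = ((k - 1 : ℕ) : ℝ) := by
        rw [Nat.cast_sub (by omega)]; norm_num
      rw [hc, hc2, ← Nat.cast_mul, ← Nat.cast_mul, mul_comm ((n - 2).choose (k - 2)) (n - 1),
        hnat]
    · have h0 : Omega n k = ∅ := by
        rw [Omega, Finset.powersetCard_eq_empty]
        simpa using by omega
      have h1' : (n - 1).choose (k - 1) = 0 := Nat.choose_eq_zero_of_lt (by omega)
      rw [h0, h1']
      simp

lemma single_rel (n k : ℕ) (hk : 1 ≤ k) (hkn : k ≤ n) :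
    (((n - 1).choose (k - 1) : ℕ) : ℝ) * n = (n.choose k : ℝ) * k := by
  have hnat : n * (n - 1).choose (k - 1) = n.choose k * k := by
    have := Nat.add_one_mul_choose_eq (n - 1) (k - 1)
    have e1 : n - 1 + 1 = n := by omega
    have e2 : k - 1 + 1 = k := by omega
    rw [e1, e2] at this
    exact this
  have := congrArg (fun m : ℕ => (m : ℝ)) hnat
  push_cast at this
  linarith

lemma sum_lin (n k : ℕ) (hk : 1 ≤ k) (c : Fin n → ℝ) :
    ∑ s ∈ Omega n k, (∑ i, if i ∈ s then c i else 0)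
      = ((n - 1).choose (k - 1) : ℝ) * ∑ i, c i := by
  rw [Finset.sum_comm, Finset.mul_sum]
  refine Finset.sum_congr rfl fun i _ => ?_
  rw [← Finset.sum_filter, Finset.sum_const, count_single n k hk i, nsmul_eq_mul]

lemma sum_sq (n k : ℕ) (hk : 1 ≤ k) (c : Fin n → ℝ) :
    (∑ s ∈ Omega n k, (∑ i, if i ∈ s then c i else 0) ^ 2) * ((n : ℝ) - 1)
      = ((n - 1).choose (k - 1) : ℝ) *
          (((k : ℝ) - 1) * (∑ i, c i) ^ 2 + ((n : ℝ) - (k : ℝ)) * ∑ i, (c i) ^ 2) := by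
  set K1 : ℝ := ((n - 1).choose (k - 1) : ℝ) with hK1
  have h1 : (∑ s ∈ Omega n k, (∑ i, if i ∈ s then c i else 0) ^ 2)
      = ∑ i, ∑ j, (((Omega n k).filter fun s => i ∈ s ∧ j ∈ s).card : ℝ) * (c i * c j) := by
    have expand : ∀ s : Finset (Fin n), (∑ i, if i ∈ s then c i else 0) ^ 2
        = ∑ i, ∑ j, (if i ∈ s ∧ j ∈ s then c i * c j else 0) := by
      intro s
      rw [sq, Finset.sum_mul_sum]
      refine Finset.sum_congr rfl fun i _ => Finset.sum_congr rfl fun j _ => ?_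
      by_cases hi : i ∈ s <;> by_cases hj : j ∈ s <;> simp [hi, hj]
    rw [Finset.sum_congr rfl fun s _ => expand s, Finset.sum_comm]
    refine Finset.sum_congr rfl fun i _ => ?_
    rw [Finset.sum_comm]
    refine Finset.sum_congr rfl fun j _ => ?_
    rw [← Finset.sum_filter, Finset.sum_const, nsmul_eq_mul]
  rw [h1, Finset.sum_mul]
  have h2 : ∀ i : Fin n,
      (∑ j, (((Omega n k).filter fun s => i ∈ s ∧ j ∈ s).card : ℝ) * (c i * c j))
          * ((n : ℝ) - 1)
        = ∑ j, (if i = j then K1 * ((n : ℝ) - 1) else K1 * ((k : ℝ) - 1)) * (c i * c j) := by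
    intro i
    rw [Finset.sum_mul]
    refine Finset.sum_congr rfl fun j _ => ?_
    by_cases hij : i = j
    · subst hij
      have : ((Omega n k).filter fun s => i ∈ s ∧ i ∈ s)
          = (Omega n k).filter fun s => i ∈ s := by
        simp
      rw [this, count_single n k hk i, if_pos rfl]
      ring
    · rw [if_neg hij, mul_right_comm, pair_rel n k hk i j hij]
  rw [Finset.sum_congr rfl fun i _ => h2 i]
  have h3 : ∀ i : Fin n,
      ∑ j, (if i = j then K1 * ((n : ℝ) - 1) else K1 * ((k : ℝ) - 1)) * (c i * c j)
        = K1 * ((k : ℝ) - 1) * (c i * ∑ j, c j)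
            + (K1 * ((n : ℝ) - 1) - K1 * ((k : ℝ) - 1)) * (c i * c i) := by
    intro i
    have e : ∀ j : Fin n,
        (if i = j then K1 * ((n : ℝ) - 1) else K1 * ((k : ℝ) - 1)) * (c i * c j)
          = K1 * ((k : ℝ) - 1) * (c i * c j)
              + (if i = j then (K1 * ((n : ℝ) - 1) - K1 * ((k : ℝ) - 1)) * (c i * c j)
                 else 0) := by
      intro j; split_ifs <;> ring
    rw [Finset.sum_congr rfl fun j _ => e j, Finset.sum_add_distrib,
      Finset.sum_ite_eq Finset.univ i, if_pos (Finset.mem_univ i), ← Finset.mul_sum]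
    have hms : c i * ∑ j, c j = ∑ j, c i * c j := Finset.mul_sum _ _ _
    rw [hms]
  rw [Finset.sum_congr rfl fun i _ => h3 i, Finset.sum_add_distrib, ← Finset.mul_sum,
    ← Finset.sum_mul, ← Finset.mul_sum]
  have hcc : ∑ i, c i * c i = ∑ i, (c i) ^ 2 :=
    Finset.sum_congr rfl fun i _ => (sq (c i)).symm
  rw [hcc]
  ring

lemma crE_add_const (n k : ℕ) (h : ((Omega n k).card : ℝ) ≠ 0) (g : Finset (Fin n) → ℝ)
    (b : ℝ) : crE n k (fun s => g s + b) = crE n k g + b := by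
  simp only [crE, Finset.sum_add_distrib, Finset.sum_const, nsmul_eq_mul, add_div]
  rw [mul_comm, mul_div_assoc, div_self h, mul_one]

lemma crVar_add_const (n k : ℕ) (h : ((Omega n k).card : ℝ) ≠ 0) (g : Finset (Fin n) → ℝ)
    (b : ℝ) : crVar n k (fun s => g s + b) = crVar n k g := by
  simp only [crVar, crE_add_const n k h g b]
  congr 1
  funext s
  ring_nf

lemma crVar_eq (n k : ℕ) (h : ((Omega n k).card : ℝ) ≠ 0) (f : Finset (Fin n) → ℝ) :
    crVar n k f = crE n k (fun s => (f s) ^ 2) - (crE n k f) ^ 2 := by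
  have key : ∑ s ∈ Omega n k, (f s - crE n k f) ^ 2
      = (∑ s ∈ Omega n k, (f s) ^ 2) - 2 * crE n k f * (∑ s ∈ Omega n k, f s)
          + ((Omega n k).card : ℝ) * (crE n k f) ^ 2 := by
    have e : ∀ s : Finset (Fin n), (f s - crE n k f) ^ 2
        = (f s) ^ 2 - 2 * crE n k f * f s + (crE n k f) ^ 2 := fun s => by ring
    rw [Finset.sum_congr rfl fun s _ => e s, Finset.sum_add_distrib, Finset.sum_sub_distrib,
      ← Finset.mul_sum, Finset.sum_const, nsmul_eq_mul]
  have hm : crE n k f = (∑ s ∈ Omega n k, f s) / ((Omega n k).card : ℝ) := rfl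
  simp only [crVar, crE] at *
  rw [key]
  field_simp
  ring

lemma popVar_eq (n : ℕ) (hn : (n : ℝ) ≠ 0) (Y : Fin n → ℝ) :
    popVar n Y = ((n : ℝ) - 1)⁻¹ * ((∑ i, (Y i) ^ 2) - (∑ i, Y i) ^ 2 / n) := by
  simp only [popVar, popMean]
  congr 1
  have e : ∀ i : Fin n, (Y i - (n : ℝ)⁻¹ * ∑ kk, Y kk) ^ 2
      = (Y i) ^ 2 - 2 * (n : ℝ)⁻¹ * (∑ kk, Y kk) * Y i + ((n : ℝ)⁻¹ * ∑ kk, Y kk) ^ 2 :=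
    fun i => by ring
  rw [Finset.sum_congr rfl fun i _ => e i, Finset.sum_add_distrib, Finset.sum_sub_distrib,
    ← Finset.mul_sum, Finset.sum_const, Finset.card_univ, Fintype.card_fin, nsmul_eq_mul]
  field_simp
  ring

lemma neyman (n n₁ n₀ : ℕ) (hn : 2 ≤ n) (hn₁ : 1 ≤ n₁) (hn₀ : 1 ≤ n₀)
    (hsum : n₁ + n₀ = n) (Y1 Y0 : Fin n → ℝ) :
    (n : ℝ) * crVar n n₁ (tauHat n n₁ n₀ Y1 Y0) = Vtt n n₁ n₀ Y1 Y0 := by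
  have hkn : n₁ ≤ n := by omega
  have hNpos : 0 < (Omega n n₁).card := by
    rw [card_Omega]; exact Nat.choose_pos hkn
  have hN : ((Omega n n₁).card : ℝ) ≠ 0 := Nat.cast_ne_zero.mpr hNpos.ne'
  have hnne : (n : ℝ) ≠ 0 := Nat.cast_ne_zero.mpr (by omega)
  have hn₁ne : (n₁ : ℝ) ≠ 0 := Nat.cast_ne_zero.mpr (by omega)
  have hn₀ne : (n₀ : ℝ) ≠ 0 := Nat.cast_ne_zero.mpr (by omega)
  have hn1ne : (n : ℝ) - 1 ≠ 0 := by
    have : (2 : ℝ) ≤ (n : ℝ) := by exact_mod_cast hn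
    linarith
  set c : Fin n → ℝ := fun i => Y1 i * (n₁ : ℝ)⁻¹ + Y0 i * (n₀ : ℝ)⁻¹ with hc
  set b : ℝ := -((n₀ : ℝ)⁻¹ * ∑ i, Y0 i) with hb
  have hfg : tauHat n n₁ n₀ Y1 Y0 = fun s => (∑ i, if i ∈ s then c i else 0) + b := by
    funext s
    have e0 : ∑ i, (if i ∈ s then (0 : ℝ) else Y0 i)
        = (∑ i, Y0 i) - ∑ i, (if i ∈ s then Y0 i else 0) := by
      rw [← Finset.sum_sub_distrib]
      exact Finset.sum_congr rfl fun i _ => by split_ifs <;> ring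
    have e1 : ∑ i, (if i ∈ s then c i else 0)
        = (∑ i, (if i ∈ s then Y1 i else 0)) * (n₁ : ℝ)⁻¹
            + (∑ i, (if i ∈ s then Y0 i else 0)) * (n₀ : ℝ)⁻¹ := by
      rw [Finset.sum_mul, Finset.sum_mul, ← Finset.sum_add_distrib]
      exact Finset.sum_congr rfl fun i _ => by simp only [hc]; split_ifs <;> ring
    simp only [tauHat]
    rw [e0, e1, hb]
    ring
  rw [hfg, crVar_add_const n n₁ hN _ b, crVar_eq n n₁ hN]
  set N : ℝ := ((Omega n n₁).card : ℝ) with hNdef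
  set K1 : ℝ := (((n - 1).choose (n₁ - 1) : ℕ) : ℝ) with hK1def
  set S : ℝ := ∑ i, c i with hSdef
  set Q : ℝ := ∑ i, (c i) ^ 2 with hQdef
  have hE : crE n n₁ (fun s => ∑ i, if i ∈ s then c i else 0) = K1 * S / N := by
    simp only [crE]
    rw [sum_lin n n₁ hn₁ c]
  have hE2 : crE n n₁ (fun s => (∑ i, if i ∈ s then c i else 0) ^ 2)
      = K1 * (((n₁ : ℝ) - 1) * S ^ 2 + ((n : ℝ) - (n₁ : ℝ)) * Q) / (N * ((n : ℝ) - 1)) := by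
    simp only [crE]
    have hss := sum_sq n n₁ hn₁ c
    rw [div_eq_div_iff hN (mul_ne_zero hN hn1ne)]
    calc (∑ s ∈ Omega n n₁, (∑ i, if i ∈ s then c i else 0) ^ 2) * (N * ((n : ℝ) - 1))
        = ((∑ s ∈ Omega n n₁, (∑ i, if i ∈ s then c i else 0) ^ 2) * ((n : ℝ) - 1)) * N := by
          ring
      _ = (K1 * (((n₁ : ℝ) - 1) * S ^ 2 + ((n : ℝ) - (n₁ : ℝ)) * Q)) * N := by rw [hss]
      _ = K1 * (((n₁ : ℝ) - 1) * S ^ 2 + ((n : ℝ) - (n₁ : ℝ)) * Q) * N := by ring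
  rw [hE, hE2]
  set A1 : ℝ := ∑ i, Y1 i with hA1
  set A0 : ℝ := ∑ i, Y0 i with hA0
  set B1 : ℝ := ∑ i, (Y1 i) ^ 2 with hB1
  set B0 : ℝ := ∑ i, (Y0 i) ^ 2 with hB0
  set C2 : ℝ := ∑ i, Y1 i * Y0 i with hC2
  have hpv1 : popVar n Y1 = ((n : ℝ) - 1)⁻¹ * (B1 - A1 ^ 2 / n) := popVar_eq n hnne Y1
  have hpv0 : popVar n Y0 = ((n : ℝ) - 1)⁻¹ * (B0 - A0 ^ 2 / n) := popVar_eq n hnne Y0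
  have hpvt : popVar n (fun i => Y1 i - Y0 i)
      = ((n : ℝ) - 1)⁻¹ * ((B1 - 2 * C2 + B0) - (A1 - A0) ^ 2 / n) := by
    rw [popVar_eq n hnne]
    have d1 : ∑ i, (Y1 i - Y0 i) ^ 2 = B1 - 2 * C2 + B0 := by
      have e : ∀ i : Fin n, (Y1 i - Y0 i) ^ 2
          = (Y1 i) ^ 2 - 2 * (Y1 i * Y0 i) + (Y0 i) ^ 2 := fun i => by ring
      rw [Finset.sum_congr rfl fun i _ => e i, Finset.sum_add_distrib,
        Finset.sum_sub_distrib, ← Finset.mul_sum]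
    have d2 : ∑ i, (Y1 i - Y0 i) = A1 - A0 := Finset.sum_sub_distrib _ _
    rw [d1, d2]
  have hS : S = A1 * (n₁ : ℝ)⁻¹ + A0 * (n₀ : ℝ)⁻¹ := by
    rw [hSdef, hA1, hA0, Finset.sum_mul, Finset.sum_mul, ← Finset.sum_add_distrib]
  have hQ : Q = B1 * ((n₁ : ℝ)⁻¹) ^ 2 + 2 * C2 * ((n₁ : ℝ)⁻¹ * (n₀ : ℝ)⁻¹)
      + B0 * ((n₀ : ℝ)⁻¹) ^ 2 := by
    rw [hQdef, hB1, hB0, hC2, Finset.sum_mul, Finset.sum_mul, Finset.mul_sum,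
      Finset.sum_mul]
    rw [← Finset.sum_add_distrib, ← Finset.sum_add_distrib]
    exact Finset.sum_congr rfl fun i _ => by simp only [hc]; ring
  have hK1v : K1 = N * (n₁ : ℝ) / (n : ℝ) := by
    rw [eq_div_iff hnne]
    have := single_rel n n₁ hn₁ hkn
    rw [hK1def, hNdef, card_Omega]
    exact_mod_cast this
  have hnR : (n : ℝ) = (n₁ : ℝ) + (n₀ : ℝ) := by exact_mod_cast hsum.symm
  rw [Vtt, hpv1, hpv0, hpvt, hS, hQ, hK1v, hnR]
  have hn1ne' : (n₁ : ℝ) + (n₀ : ℝ) - 1 ≠ 0 := by rw [← hnR]; exact hn1ne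
  have hnne' : (n₁ : ℝ) + (n₀ : ℝ) ≠ 0 := by rw [← hnR]; exact hnne
  field_simp
  ring

end CRE

/-- Lemma A11: for every `γ`,
`n·Var(τ̂ − γᵀτ̂_w) = (V_ττ − V_τw V_ww⁻¹ V_wτ) + (r₁r₀)⁻¹ (γ−γ̃)ᵀ S_w² (γ−γ̃)`. -/
theorem statement8 (n n₁ n₀ J : ℕ) (hn : 2 ≤ n) (hn₁ : 1 ≤ n₁) (hn₀ : 1 ≤ n₀)
    (hsum : n₁ + n₀ = n) (Y1 Y0 : Fin n → ℝ) (w : Fin n → Fin J → ℝ)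
    (hw : ∀ j, ∑ i, w i j = 0) (hSw : IsUnit (covMat n J J w w).det)
    (γt : Fin J → ℝ)
    (hγt : γt = (Vmat n n₁ n₀ J J w w)⁻¹ *ᵥ VvecTau n n₁ n₀ J w Y1 Y0) :
    ∀ γ : Fin J → ℝ,
      (n : ℝ) * crVar n n₁
          (fun s => tauHat n n₁ n₀ Y1 Y0 s - γ ⬝ᵥ tauHatVec n n₁ n₀ J w s)
        = (Vtt n n₁ n₀ Y1 Y0 - VvecTau n n₁ n₀ J w Y1 Y0 ⬝ᵥ
              ((Vmat n n₁ n₀ J J w w)⁻¹ *ᵥ VvecTau n n₁ n₀ J w Y1 Y0))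
          + (((n₁ : ℝ) / n) * ((n₀ : ℝ) / n))⁻¹ *
              ((γ - γt) ⬝ᵥ (covMat n J J w w *ᵥ (γ - γt))) := by
  intro γ
  have hkn : n₁ ≤ n := by omega
  have hnne : (n : ℝ) ≠ 0 := Nat.cast_ne_zero.mpr (by omega)
  have hn₁ne : (n₁ : ℝ) ≠ 0 := Nat.cast_ne_zero.mpr (by omega)
  have hn₀ne : (n₀ : ℝ) ≠ 0 := Nat.cast_ne_zero.mpr (by omega)
  have hn1ne : (n : ℝ) - 1 ≠ 0 := by
    have : (2 : ℝ) ≤ (n : ℝ) := by exact_mod_cast hn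
    linarith
  set d : Fin n → ℝ := fun i => ∑ j, γ j * w i j with hd
  -- Step 1: the estimator is a difference-in-means for adjusted outcomes
  have hshift : (fun s => tauHat n n₁ n₀ Y1 Y0 s - γ ⬝ᵥ tauHatVec n n₁ n₀ J w s)
      = tauHat n n₁ n₀ (fun i => Y1 i - d i) (fun i => Y0 i - d i) := by
    funext s
    simp only [tauHat, tauHatVec, dotProduct]
    have e1 : ∑ i, (if i ∈ s then Y1 i - d i else 0)
        = (∑ i, if i ∈ s then Y1 i else 0) - ∑ i, (if i ∈ s then d i else 0) := by
      rw [← Finset.sum_sub_distrib]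
      exact Finset.sum_congr rfl fun i _ => by split_ifs <;> ring
    have e0 : ∑ i, (if i ∈ s then (0 : ℝ) else Y0 i - d i)
        = (∑ i, if i ∈ s then (0 : ℝ) else Y0 i)
            - ∑ i, (if i ∈ s then (0 : ℝ) else d i) := by
      rw [← Finset.sum_sub_distrib]
      exact Finset.sum_congr rfl fun i _ => by split_ifs <;> ring
    have q1 : ∑ j, γ j * ∑ i, (if i ∈ s then w i j else 0)
        = ∑ i, (if i ∈ s then d i else 0) := by
      simp_rw [Finset.mul_sum]
      rw [Finset.sum_comm]
      refine Finset.sum_congr rfl fun i _ => ?_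
      by_cases hi : i ∈ s
      · simp only [hi, if_true, hd]
      · simp [hi]
    have q0 : ∑ j, γ j * ∑ i, (if i ∈ s then (0 : ℝ) else w i j)
        = ∑ i, (if i ∈ s then (0 : ℝ) else d i) := by
      simp_rw [Finset.mul_sum]
      rw [Finset.sum_comm]
      refine Finset.sum_congr rfl fun i _ => ?_
      by_cases hi : i ∈ s
      · simp [hi]
      · simp only [hi, if_false, hd]
    have g1 : ∑ j, γ j * ((n₁ : ℝ)⁻¹ * ∑ i, (if i ∈ s then w i j else 0)
          - (n₀ : ℝ)⁻¹ * ∑ i, (if i ∈ s then (0 : ℝ) else w i j))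
        = (n₁ : ℝ)⁻¹ * ∑ i, (if i ∈ s then d i else 0)
            - (n₀ : ℝ)⁻¹ * ∑ i, (if i ∈ s then (0 : ℝ) else d i) := by
      have e : ∀ j : Fin J, γ j * ((n₁ : ℝ)⁻¹ * ∑ i, (if i ∈ s then w i j else 0)
            - (n₀ : ℝ)⁻¹ * ∑ i, (if i ∈ s then (0 : ℝ) else w i j))
          = (n₁ : ℝ)⁻¹ * (γ j * ∑ i, (if i ∈ s then w i j else 0))
              - (n₀ : ℝ)⁻¹ * (γ j * ∑ i, (if i ∈ s then (0 : ℝ) else w i j)) :=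
        fun j => by ring
      rw [Finset.sum_congr rfl fun j _ => e j, Finset.sum_sub_distrib,
        ← Finset.mul_sum, ← Finset.mul_sum, q1, q0]
    rw [e1, e0, g1]
    ring
  rw [hshift, CRE.neyman n n₁ n₀ hn hn₁ hn₀ hsum]
  -- Step 2: matrix algebra, eliminating the inverse
  set Smat := covMat n J J w w with hSmat
  set V := VvecTau n n₁ n₀ J w Y1 Y0 with hV
  set cst : ℝ := ((n₁ : ℝ) / n) * ((n₀ : ℝ) / n) with hcst
  have hc0 : cst ≠ 0 := by
    exact mul_ne_zero (div_ne_zero hn₁ne hnne) (div_ne_zero hn₀ne hnne)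
  have hVinv : (Vmat n n₁ n₀ J J w w)⁻¹ = cst • Smat⁻¹ := by
    apply Matrix.inv_eq_right_inv
    rw [Vmat, ← hcst, ← hSmat, Matrix.smul_mul, Matrix.mul_smul,
      Matrix.mul_nonsing_inv _ hSw, smul_smul, inv_mul_cancel₀ hc0, one_smul]
  have hγt2 : γt = cst • (Smat⁻¹ *ᵥ V) := by
    rw [hγt, hVinv, Matrix.smul_mulVec]
  have hSγt : Smat *ᵥ γt = cst • V := by
    rw [hγt2, Matrix.mulVec_smul, Matrix.mulVec_mulVec,
      Matrix.mul_nonsing_inv _ hSw, Matrix.one_mulVec]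
  have hsymm : ∀ x y : Fin J → ℝ, x ⬝ᵥ (Smat *ᵥ y) = y ⬝ᵥ (Smat *ᵥ x) := by
    intro x y
    simp only [hSmat, covMat, Matrix.mulVec, dotProduct, Matrix.of_apply]
    simp_rw [Finset.mul_sum]
    rw [Finset.sum_comm]
    refine Finset.sum_congr rfl fun a _ => Finset.sum_congr rfl fun b _ => ?_
    have hsw : ∑ i, ((n : ℝ) - 1)⁻¹ * (w i b * w i a)
        = ∑ i, ((n : ℝ) - 1)⁻¹ * (w i a * w i b) :=
      Finset.sum_congr rfl fun i _ => by ring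
    rw [hsw]
    ring
  have hdot1 : γ ⬝ᵥ (Smat *ᵥ γt) = cst * (γ ⬝ᵥ V) := by
    rw [hSγt, dotProduct_smul, smul_eq_mul]
  have hdot2 : γt ⬝ᵥ (Smat *ᵥ γt) = cst * (γt ⬝ᵥ V) := by
    rw [hSγt, dotProduct_smul, smul_eq_mul]
  have hexp : (γ - γt) ⬝ᵥ (Smat *ᵥ (γ - γt))
      = γ ⬝ᵥ (Smat *ᵥ γ) - 2 * (cst * (γ ⬝ᵥ V)) + cst * (γt ⬝ᵥ V) := by
    rw [Matrix.mulVec_sub, dotProduct_sub, sub_dotProduct, sub_dotProduct,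
      hsymm γt γ, hdot1, hdot2]
    ring
  have hVdot : V ⬝ᵥ ((Vmat n n₁ n₀ J J w w)⁻¹ *ᵥ V) = γt ⬝ᵥ V := by
    rw [← hγt, dotProduct_comm]
  rw [hVdot, hexp]
  -- Step 3: expand everything into sums
  have hd0 : ∑ i, d i = 0 := by
    simp only [hd]
    rw [Finset.sum_comm]
    have : ∀ j : Fin J, ∑ i, γ j * w i j = 0 := by
      intro j
      rw [← Finset.mul_sum, hw j, mul_zero]
    rw [Finset.sum_congr rfl fun j _ => this j, Finset.sum_const, smul_zero]
  have key : ∀ t : Fin n → ℝ,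
      ∑ j, γ j * (((n : ℝ) - 1)⁻¹ * ∑ i, w i j * t i)
        = ((n : ℝ) - 1)⁻¹ * ∑ i, d i * t i := by
    intro t
    have e : ∀ j : Fin J, γ j * (((n : ℝ) - 1)⁻¹ * ∑ i, w i j * t i)
        = ((n : ℝ) - 1)⁻¹ * (γ j * ∑ i, w i j * t i) := fun j => by ring
    rw [Finset.sum_congr rfl fun j _ => e j, ← Finset.mul_sum]
    congr 1
    simp_rw [Finset.mul_sum]
    rw [Finset.sum_comm]
    refine Finset.sum_congr rfl fun i _ => ?_
    simp only [hd]
    rw [Finset.sum_mul]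
    exact Finset.sum_congr rfl fun j _ => by ring
  have hcenter : ∀ t : Fin n → ℝ,
      ∑ i, d i * (t i - popMean n t) = ∑ i, d i * t i := by
    intro t
    have e : ∀ i : Fin n, d i * (t i - popMean n t)
        = d i * t i - d i * popMean n t := fun i => by ring
    rw [Finset.sum_congr rfl fun i _ => e i, Finset.sum_sub_distrib,
      ← Finset.sum_mul, hd0, zero_mul, sub_zero]
  have hγV : γ ⬝ᵥ V = ((n₁ : ℝ) / n)⁻¹ * (((n : ℝ) - 1)⁻¹ * ∑ i, d i * Y1 i)
      + ((n₀ : ℝ) / n)⁻¹ * (((n : ℝ) - 1)⁻¹ * ∑ i, d i * Y0 i) := by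
    simp only [hV, VvecTau, dotProduct, covVec, Pi.add_apply, Pi.smul_apply, smul_eq_mul]
    have e : ∀ j : Fin J,
        γ j * (((n₁ : ℝ) / n)⁻¹ * (((n : ℝ) - 1)⁻¹ * ∑ i, w i j * (Y1 i - popMean n Y1))
          + ((n₀ : ℝ) / n)⁻¹ * (((n : ℝ) - 1)⁻¹ * ∑ i, w i j * (Y0 i - popMean n Y0)))
        = ((n₁ : ℝ) / n)⁻¹ *
            (γ j * (((n : ℝ) - 1)⁻¹ * ∑ i, w i j * (Y1 i - popMean n Y1)))
          + ((n₀ : ℝ) / n)⁻¹ *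
            (γ j * (((n : ℝ) - 1)⁻¹ * ∑ i, w i j * (Y0 i - popMean n Y0))) :=
      fun j => by ring
    rw [Finset.sum_congr rfl fun j _ => e j, Finset.sum_add_distrib, ← Finset.mul_sum,
      ← Finset.mul_sum, key (fun i => Y1 i - popMean n Y1),
      key (fun i => Y0 i - popMean n Y0), hcenter Y1, hcenter Y0]
  have hγSγ : γ ⬝ᵥ (Smat *ᵥ γ) = ((n : ℝ) - 1)⁻¹ * ∑ i, (d i) ^ 2 := by
    simp only [hSmat, covMat, Matrix.mulVec, dotProduct, Matrix.of_apply]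
    have e : ∀ j : Fin J, ∑ k, (((n : ℝ) - 1)⁻¹ * ∑ i, w i j * w i k) * γ k
        = ((n : ℝ) - 1)⁻¹ * ∑ i, w i j * d i := by
      intro j
      have e2 : ∀ k : Fin J, (((n : ℝ) - 1)⁻¹ * ∑ i, w i j * w i k) * γ k
          = ((n : ℝ) - 1)⁻¹ * ((∑ i, w i j * w i k) * γ k) := fun k => by ring
      rw [Finset.sum_congr rfl fun k _ => e2 k, ← Finset.mul_sum]
      congr 1
      simp_rw [Finset.sum_mul]
      rw [Finset.sum_comm]
      refine Finset.sum_congr rfl fun i _ => ?_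
      simp only [hd]
      rw [Finset.mul_sum]
      exact Finset.sum_congr rfl fun k _ => by ring
    calc ∑ j, γ j * ∑ k, (((n : ℝ) - 1)⁻¹ * ∑ i, w i j * w i k) * γ k
        = ∑ j, γ j * (((n : ℝ) - 1)⁻¹ * ∑ i, w i j * d i) :=
          Finset.sum_congr rfl fun j _ => by rw [e j]
      _ = ((n : ℝ) - 1)⁻¹ * ∑ i, d i * d i := key d
      _ = ((n : ℝ) - 1)⁻¹ * ∑ i, (d i) ^ 2 := by
          rw [Finset.sum_congr rfl fun i _ => (sq (d i)).symm]
  -- Step 4: final scalar identity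
  have hnR : (n : ℝ) = (n₁ : ℝ) + (n₀ : ℝ) := by exact_mod_cast hsum.symm
  have hn1ne' : (n₁ : ℝ) + (n₀ : ℝ) - 1 ≠ 0 := by rw [← hnR]; exact hn1ne
  have hnne' : (n₁ : ℝ) + (n₀ : ℝ) ≠ 0 := by rw [← hnR]; exact hnne
  have hfinal : Vtt n n₁ n₀ (fun i => Y1 i - d i) (fun i => Y0 i - d i)
      = Vtt n n₁ n₀ Y1 Y0 - 2 * (γ ⬝ᵥ V) + cst⁻¹ * (γ ⬝ᵥ (Smat *ᵥ γ)) := by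
    have hp1 : popVar n (fun i => Y1 i - d i)
        = ((n : ℝ) - 1)⁻¹ * (((∑ i, (Y1 i) ^ 2) - 2 * ∑ i, d i * Y1 i + ∑ i, (d i) ^ 2)
            - (∑ i, Y1 i) ^ 2 / n) := by
      rw [CRE.popVar_eq n hnne]
      have s1 : ∑ i, (Y1 i - d i) ^ 2
          = (∑ i, (Y1 i) ^ 2) - 2 * (∑ i, d i * Y1 i) + ∑ i, (d i) ^ 2 := by
        have e : ∀ i : Fin n, (Y1 i - d i) ^ 2
            = (Y1 i) ^ 2 - 2 * (d i * Y1 i) + (d i) ^ 2 := fun i => by ring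
        rw [Finset.sum_congr rfl fun i _ => e i, Finset.sum_add_distrib,
          Finset.sum_sub_distrib, ← Finset.mul_sum]
      have s2 : ∑ i, (Y1 i - d i) = ∑ i, Y1 i := by
        rw [Finset.sum_sub_distrib, hd0, sub_zero]
      rw [s1, s2]
    have hp0 : popVar n (fun i => Y0 i - d i)
        = ((n : ℝ) - 1)⁻¹ * (((∑ i, (Y0 i) ^ 2) - 2 * ∑ i, d i * Y0 i + ∑ i, (d i) ^ 2)
            - (∑ i, Y0 i) ^ 2 / n) := by
      rw [CRE.popVar_eq n hnne]
      have s1 : ∑ i, (Y0 i - d i) ^ 2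
          = (∑ i, (Y0 i) ^ 2) - 2 * (∑ i, d i * Y0 i) + ∑ i, (d i) ^ 2 := by
        have e : ∀ i : Fin n, (Y0 i - d i) ^ 2
            = (Y0 i) ^ 2 - 2 * (d i * Y0 i) + (d i) ^ 2 := fun i => by ring
        rw [Finset.sum_congr rfl fun i _ => e i, Finset.sum_add_distrib,
          Finset.sum_sub_distrib, ← Finset.mul_sum]
      have s2 : ∑ i, (Y0 i - d i) = ∑ i, Y0 i := by
        rw [Finset.sum_sub_distrib, hd0, sub_zero]
      rw [s1, s2]
    have hdiff : (fun i => (Y1 i - d i) - (Y0 i - d i)) = fun i => Y1 i - Y0 i :=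
      funext fun i => by ring
    rw [Vtt, Vtt, hp1, hp0, hdiff, hγV, hγSγ, CRE.popVar_eq n hnne Y1, CRE.popVar_eq n hnne Y0,
      hcst, hnR]
    field_simp
    ring
  rw [hfinal]
  have hinv : cst⁻¹ * cst = 1 := inv_mul_cancel₀ hc0
  linear_combination (2 * (γ ⬝ᵥ V) - γt ⬝ᵥ V) * hinv
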